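/- Let a, x ∈ ℝ with sin a, sin x, sin(x−a) all nonzero, let A = √(3 + 2(cos 2a + cos 2(x−a) + cos 2x)) ≠ 0, and suppose there exist θ₁ ∈ ℝ and ω ∈ ℝ such that θ₁, θ₂ = θ₁+a, θ₃ = θ₁+x and ω satisfy the equations of motion (ω²/2)·sin(2θ_k) = Σ_{i≠k} sin(θ_k−θ_i)/|sin(θ_k−θ_i)|³ for k = 1,2,3. Then f = (G₁₂−G₂₃)(F₃₁−F₁₂) − (F₁₂−F₂₃)(G₃₁−G₁₂) = 0. -/
import Mathlib


open Real

/-- If a configuration θ₁, θ₂ = θ₁+a, θ₃ = θ₁+x with some ω satisfies the equations of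
motion and A ≠ 0, then the shape (a,x) satisfies the rigid-rotator condition f = 0. -/
theorem stmt_6 (a x : ℝ)
    (hsa : sin a ≠ 0) (hsx : sin x ≠ 0) (hsxa : sin (x - a) ≠ 0)
    (hA : Real.sqrt (3 + 2 * (cos (2 * a) + cos (2 * (x - a)) + cos (2 * x))) ≠ 0)
    (θ₁ ω : ℝ)
    (eom1 : ω ^ 2 / 2 * sin (2 * θ₁)
      = sin (θ₁ - (θ₁ + a)) / |sin (θ₁ - (θ₁ + a))| ^ 3
        + sin (θ₁ - (θ₁ + x)) / |sin (θ₁ - (θ₁ + x))| ^ 3)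
    (eom2 : ω ^ 2 / 2 * sin (2 * (θ₁ + a))
      = sin ((θ₁ + a) - θ₁) / |sin ((θ₁ + a) - θ₁)| ^ 3
        + sin ((θ₁ + a) - (θ₁ + x)) / |sin ((θ₁ + a) - (θ₁ + x))| ^ 3)
    (eom3 : ω ^ 2 / 2 * sin (2 * (θ₁ + x))
      = sin ((θ₁ + x) - θ₁) / |sin ((θ₁ + x) - θ₁)| ^ 3
        + sin ((θ₁ + x) - (θ₁ + a)) / |sin ((θ₁ + x) - (θ₁ + a))| ^ 3) :
    (sin (2 * a) - sin (2 * (x - a))) * (-(sin x / |sin x| ^ 3) - sin a / |sin a| ^ 3)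
      - (sin a / |sin a| ^ 3 - sin (x - a) / |sin (x - a)| ^ 3)
        * (-sin (2 * x) - sin (2 * a)) = 0 := by
  rw [show θ₁ - (θ₁ + a) = -a by ring, show θ₁ - (θ₁ + x) = -x by ring] at eom1
  rw [show (θ₁ + a) - θ₁ = a by ring, show (θ₁ + a) - (θ₁ + x) = -(x - a) by ring] at eom2
  rw [show (θ₁ + x) - θ₁ = x by ring, show (θ₁ + x) - (θ₁ + a) = x - a by ring] at eom3
  simp only [sin_neg, abs_neg] at eom1 eom2 eom3
  have key : -sin (2*(x-a)) * sin (2*θ₁) + sin (2*x) * sin (2*(θ₁+a))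
      - sin (2*a) * sin (2*(θ₁+x)) = 0 := by
    rw [show 2*(x-a) = 2*x - 2*a by ring, show 2*(θ₁+a) = 2*θ₁ + 2*a by ring,
      show 2*(θ₁+x) = 2*θ₁ + 2*x by ring, sin_sub, sin_add, sin_add]
    ring
  linear_combination sin (2*(x-a)) * eom1 + (-sin (2*x)) * eom2 + sin (2*a) * eom3
    + (ω^2/2) * key
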